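/- Fix a nonempty finite set A ⊆ 𝔽₂ⁿ. For any independent 𝔽₂ⁿ-valued random variables X, Y and any (X, Z) jointly distributed with X taking values in 𝔽₂ⁿ: τ⁺(X+Y) ≤ τ⁺(X) + H(X+Y) − H(X), and τ⁺(X | Z) ≤ τ⁺(X). -/

import Mathlib

open scoped BigOperators Pointwise Classical

noncomputable section

/-- `𝔽₂ⁿ`, the `n`-dimensional vector space over the field with two elements. -/
abbrev F2 (n : ℕ) : Type := Fin n → ZMod 2

/-- `f` is a probability distribution on the finite type `α`. -/
def IsDist {α : Type*} [Fintype α] (f : α → ℝ) : Prop :=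
  (∀ x, 0 ≤ f x) ∧ ∑ x, f x = 1

/-- Shannon entropy (base 2) of a distribution on a finite type. -/
def ent {α : Type*} [Fintype α] (f : α → ℝ) : ℝ :=
  ∑ x, -(f x * Real.logb 2 (f x))

/-- Distribution of `X + Y` for independent `X ∼ f`, `Y ∼ g`. -/
def addDist {α : Type*} [Fintype α] [AddGroup α] (f g : α → ℝ) : α → ℝ :=
  fun s => ∑ x, f x * g (s - x)

/-- Distribution of `X - Y` for independent `X ∼ f`, `Y ∼ g`. -/
def subDist {α : Type*} [Fintype α] [AddGroup α] (f g : α → ℝ) : α → ℝ :=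
  fun s => ∑ x, f x * g (x - s)

/-- Entropic Ruzsa distance `d[X;Y] = H(X' + Y') - (H(X) + H(Y))/2` (in `𝔽₂ⁿ`
addition coincides with subtraction). -/
def rdist {α : Type*} [Fintype α] [AddGroup α] (f g : α → ℝ) : ℝ :=
  ent (addDist f g) - (ent f + ent g) / 2

/-- Entropic Ruzsa distance `d[X;Y] = H(X' - Y') - (H(X) + H(Y))/2` in a general group. -/
def rdistSub {α : Type*} [Fintype α] [AddGroup α] (f g : α → ℝ) : ℝ :=
  ent (subDist f g) - (ent f + ent g) / 2

/-- Pushforward of a distribution along a map. -/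
def pmap {α β : Type*} [Fintype α] (h : α → β) (π : α → ℝ) : β → ℝ :=
  fun b => ∑ a, if h a = b then π a else 0

/-- First marginal of a joint distribution. -/
def margFst {α γ : Type*} [Fintype γ] (π : α × γ → ℝ) : α → ℝ :=
  fun a => ∑ z, π (a, z)

/-- Second marginal of a joint distribution. -/
def margSnd {α γ : Type*} [Fintype α] (π : α × γ → ℝ) : γ → ℝ :=
  fun z => ∑ a, π (a, z)

/-- Conditional distribution of the first coordinate given that the second equals `z`. -/
def condDist {α γ : Type*} [Fintype α] (π : α × γ → ℝ) (z : γ) : α → ℝ :=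
  fun a => π (a, z) / margSnd π z

/-- Conditional entropy `H(X | Z) = E_{z ∼ Z} H(X |_{Z = z})`. -/
def condEnt {α γ : Type*} [Fintype α] [Fintype γ] (π : α × γ → ℝ) : ℝ :=
  ∑ z, margSnd π z * ent (condDist π z)

/-- Mutual information `I(X : Y) = H(X) + H(Y) - H(X, Y)`. -/
def mutInfo {α β : Type*} [Fintype α] [Fintype β] (π : α × β → ℝ) : ℝ :=
  ent (margFst π) + ent (margSnd π) - ent π

/-- Conditional mutual information `I(X : Y | Z) = E_{z ∼ Z} I(X|_{Z=z} : Y|_{Z=z})`. -/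
def condMutInfo {α β γ : Type*} [Fintype α] [Fintype β] [Fintype γ]
    (π : (α × β) × γ → ℝ) : ℝ :=
  ∑ z, margSnd π z * mutInfo (condDist π z)

/-- Conditioned Ruzsa distance `d[(X;Y) | Z] = E_{z ∼ Z} d[X|_{Z=z} ; Y|_{Z=z}]`, where
inside the expectation the two conditioned variables are treated as independent. -/
def condRdist {α γ : Type*} [Fintype α] [Fintype γ] [AddGroup α]
    (π : (α × α) × γ → ℝ) : ℝ :=
  ∑ z, margSnd π z * rdist (pmap Prod.fst (condDist π z)) (pmap Prod.snd (condDist π z))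

/-- Doubly conditioned Ruzsa distance `d[X | Z ; Y | W] = E_{z,w} d[X|_{Z=z} ; Y|_{W=w}]`
for `(X,Z)` independent of `(Y,W)`. -/
def condRdist2 {α γ δ : Type*} [Fintype α] [Fintype γ] [Fintype δ] [AddGroup α]
    (π : α × γ → ℝ) (ρ : α × δ → ℝ) : ℝ :=
  ∑ z, ∑ w, margSnd π z * margSnd ρ w * rdist (condDist π z) (condDist ρ w)

/-- The uniform distribution on a finite set `A`. -/
def unifFin {α : Type*} [Fintype α] (A : Finset α) : α → ℝ :=
  fun x => if x ∈ A then (A.card : ℝ)⁻¹ else 0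

/-- The uniform distribution on a set `S`. -/
def unifSet {α : Type*} [Fintype α] (S : Set α) : α → ℝ :=
  fun x => if x ∈ S then (Nat.card S : ℝ)⁻¹ else 0

/-- Kullback–Leibler divergence (base-2 logarithm), with value `⊤` if the support of `f`
is not contained in the support of `g`. -/
def KL {α : Type*} [Fintype α] (f g : α → ℝ) : EReal :=
  if ∀ x, g x = 0 → f x = 0 then
    ((∑ x, f x * Real.logb 2 (f x / g x) : ℝ) : EReal)
  else ⊤

/-- `τ⁻(X) := inf_T D_KL(X ‖ U_A + T)`, the infimum over all `𝔽₂ⁿ`-valued random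
variables `T` independent of `U_A`. -/
def tauMinus {n : ℕ} (A : Finset (F2 n)) (f : F2 n → ℝ) : EReal :=
  ⨅ t : {t : F2 n → ℝ // IsDist t}, KL f (addDist (unifFin A) t.1)

/-- `τ⁺(X) := τ⁻(X) + H(X) - H(U_A)`. -/
def tauPlus {n : ℕ} (A : Finset (F2 n)) (f : F2 n → ℝ) : EReal :=
  tauMinus A f + ((ent f - ent (unifFin A) : ℝ) : EReal)

/-! ### Auxiliary lemmas -/

lemma log_sum_ineq' {ι : Type*} (s : Finset ι) (a b : ι → ℝ)
    (ha : ∀ i ∈ s, 0 ≤ a i) (hb : ∀ i ∈ s, 0 ≤ b i)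
    (hab : ∀ i ∈ s, b i = 0 → a i = 0) :
    (∑ i ∈ s, a i) * Real.log ((∑ i ∈ s, a i) / (∑ i ∈ s, b i))
      ≤ ∑ i ∈ s, a i * Real.log (a i / b i) := by
  classical
  set t := s.filter (fun i => b i ≠ 0) with ht
  have hts : t ⊆ s := Finset.filter_subset _ _
  have hsa : ∑ i ∈ s, a i = ∑ i ∈ t, a i := by
    rw [ht, Finset.sum_filter]
    refine Finset.sum_congr rfl fun i hi => ?_
    by_cases h : b i = 0
    · simp [h, hab i hi h]
    · simp [h]
  have hsb : ∑ i ∈ s, b i = ∑ i ∈ t, b i := by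
    rw [ht, Finset.sum_filter]
    refine Finset.sum_congr rfl fun i hi => ?_
    by_cases h : b i = 0 <;> simp [h]
  have hsr : ∑ i ∈ s, a i * Real.log (a i / b i)
      = ∑ i ∈ t, a i * Real.log (a i / b i) := by
    rw [ht, Finset.sum_filter]
    refine Finset.sum_congr rfl fun i hi => ?_
    by_cases h : b i = 0
    · simp [h, hab i hi h]
    · simp [h]
  rw [hsa, hsb, hsr]
  have hbt : ∀ i ∈ t, 0 < b i := fun i hi => by
    have := hb i (hts hi)
    have h := (Finset.mem_filter.mp hi).2
    exact lt_of_le_of_ne this (Ne.symm h)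
  by_cases hB : ∑ i ∈ t, b i = 0
  · have h0 : ∀ i ∈ t, b i = 0 :=
      Finset.sum_eq_zero_iff_of_nonneg (fun i hi => (hbt i hi).le) |>.mp hB
    have hte : t = ∅ := by
      by_contra h
      obtain ⟨i, hi⟩ := Finset.nonempty_of_ne_empty h
      exact (hbt i hi).ne' (h0 i hi)
    simp [hte]
  have hBpos : 0 < ∑ i ∈ t, b i :=
    lt_of_le_of_ne (Finset.sum_nonneg fun i hi => (hbt i hi).le) (Ne.symm hB)
  set A := ∑ i ∈ t, a i with hA
  set B := ∑ i ∈ t, b i with hBdef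
  have hJ := Real.convexOn_mul_log.map_centerMass_le (t := t) (w := b)
    (p := fun i => a i / b i) (fun i hi => (hbt i hi).le) hBpos
    (fun i hi => by exact div_nonneg (ha i (hts hi)) (hbt i hi).le)
  have hcm : t.centerMass b (fun i => a i / b i) = A / B := by
    rw [Finset.centerMass]
    simp only [smul_eq_mul]
    rw [div_eq_inv_mul]
    congr 1
    refine Finset.sum_congr rfl fun i hi => ?_
    rw [mul_div_cancel₀ _ (hbt i hi).ne']
  rw [hcm] at hJ
  have hcm2 : t.centerMass b ((fun x => x * Real.log x) ∘ fun i => a i / b i)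
      = B⁻¹ * ∑ i ∈ t, a i * Real.log (a i / b i) := by
    rw [Finset.centerMass]
    simp only [smul_eq_mul, Function.comp]
    congr 1
    refine Finset.sum_congr rfl fun i hi => ?_
    have h1 : b i * (a i / b i * Real.log (a i / b i))
        = (b i * (a i / b i)) * Real.log (a i / b i) := by ring
    rw [h1, mul_div_cancel₀ _ (hbt i hi).ne']
  rw [hcm2] at hJ
  have h2 := mul_le_mul_of_nonneg_left hJ hBpos.le
  calc A * Real.log (A / B) = B * (A / B * Real.log (A / B)) := by field_simp
    _ ≤ B * (B⁻¹ * ∑ i ∈ t, a i * Real.log (a i / b i)) := h2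
    _ = ∑ i ∈ t, a i * Real.log (a i / b i) := by field_simp

lemma logb_sum_ineq' {ι : Type*} (s : Finset ι) (a b : ι → ℝ)
    (ha : ∀ i ∈ s, 0 ≤ a i) (hb : ∀ i ∈ s, 0 ≤ b i)
    (hab : ∀ i ∈ s, b i = 0 → a i = 0) :
    (∑ i ∈ s, a i) * Real.logb 2 ((∑ i ∈ s, a i) / (∑ i ∈ s, b i))
      ≤ ∑ i ∈ s, a i * Real.logb 2 (a i / b i) := by
  have h := log_sum_ineq' s a b ha hb hab
  have h2 : (0:ℝ) < Real.log 2 := Real.log_pos one_lt_two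
  simp only [Real.logb]
  rw [mul_div_assoc']
  have heq : ∑ i ∈ s, a i * (Real.log (a i / b i) / Real.log 2)
      = (∑ i ∈ s, a i * Real.log (a i / b i)) / Real.log 2 := by
    rw [Finset.sum_div]
    exact Finset.sum_congr rfl fun i _ => by ring
  rw [heq]
  exact div_le_div_of_nonneg_right h h2.le |>.trans_eq rfl

section ConvAux
variable {α : Type*} [Fintype α] [AddCommGroup α]

lemma sum_shift' (g : α → ℝ) (x : α) : ∑ s, g (s - x) = ∑ s, g s :=
  Fintype.sum_equiv (Equiv.subRight x) _ _ (fun _ => rfl)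

lemma addDist_nonneg' {f g : α → ℝ} (hf : ∀ x, 0 ≤ f x) (hg : ∀ x, 0 ≤ g x) (s : α) :
    0 ≤ addDist f g s :=
  Finset.sum_nonneg fun x _ => mul_nonneg (hf x) (hg _)

lemma isDist_addDist' {f g : α → ℝ} (hf : IsDist f) (hg : IsDist g) :
    IsDist (addDist f g) := by
  refine ⟨addDist_nonneg' hf.1 hg.1, ?_⟩
  rw [show ∑ s, addDist f g s = ∑ s, ∑ x, f x * g (s - x) from rfl, Finset.sum_comm]
  calc ∑ x, ∑ s, f x * g (s - x) = ∑ x : α, f x * ∑ s, g (s - x) := by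
        exact Finset.sum_congr rfl fun x _ => (Finset.mul_sum _ _ _).symm
    _ = ∑ x : α, f x * 1 := by
        exact Finset.sum_congr rfl fun x _ => by rw [sum_shift', hg.2]
    _ = 1 := by simp [hf.2]

lemma addDist_assoc' (u v w : α → ℝ) :
    addDist (addDist u v) w = addDist u (addDist v w) := by
  funext s
  show ∑ x, (∑ y, u y * v (x - y)) * w (s - x) = ∑ y, u y * ∑ z, v z * w (s - y - z)
  have h1 : ∀ x, (∑ y, u y * v (x - y)) * w (s - x)
      = ∑ y, u y * v (x - y) * w (s - x) := fun x => Finset.sum_mul _ _ _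
  simp_rw [h1]
  rw [Finset.sum_comm]
  refine Finset.sum_congr rfl fun y _ => ?_
  rw [Finset.mul_sum]
  refine Fintype.sum_equiv (Equiv.subRight y) _ _ fun x => ?_
  simp only [Equiv.subRight_apply]
  have hx : s - y - (x - y) = s - x := by abel
  rw [hx]
  ring

lemma addDist_support' {f g h : α → ℝ} (hf : ∀ x, 0 ≤ f x) (hg : ∀ x, 0 ≤ g x)
    (hh : ∀ x, 0 ≤ h x) (hsupp : ∀ x, h x = 0 → f x = 0) (s : α)
    (h0 : addDist h g s = 0) : addDist f g s = 0 := by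
  have hall := (Finset.sum_eq_zero_iff_of_nonneg
    (fun x _ => mul_nonneg (hh x) (hg _))).mp h0
  refine Finset.sum_eq_zero fun x hx => ?_
  rcases mul_eq_zero.mp (hall x hx) with h | h
  · rw [hsupp x h, zero_mul]
  · rw [h, mul_zero]

lemma kl_conv_real' {f g h : α → ℝ} (hf : ∀ x, 0 ≤ f x) (hg : IsDist g)
    (hh : ∀ x, 0 ≤ h x) (hsupp : ∀ x, h x = 0 → f x = 0) :
    ∑ s, addDist f g s * Real.logb 2 (addDist f g s / addDist h g s)
      ≤ ∑ x, f x * Real.logb 2 (f x / h x) := by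
  have step1 : ∀ s, addDist f g s * Real.logb 2 (addDist f g s / addDist h g s)
      ≤ ∑ x, (f x * g (s - x)) * Real.logb 2 ((f x * g (s - x)) / (h x * g (s - x))) := by
    intro s
    exact logb_sum_ineq' Finset.univ (fun x => f x * g (s - x)) (fun x => h x * g (s - x))
      (fun x _ => mul_nonneg (hf x) (hg.1 _))
      (fun x _ => mul_nonneg (hh x) (hg.1 _))
      (fun x _ hx => by
        have hx' : h x * g (s - x) = 0 := hx
        show f x * g (s - x) = 0
        rcases mul_eq_zero.mp hx' with h' | h'
        · rw [hsupp x h', zero_mul]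
        · rw [h', mul_zero])
  calc ∑ s, addDist f g s * Real.logb 2 (addDist f g s / addDist h g s)
      ≤ ∑ s, ∑ x, (f x * g (s - x)) * Real.logb 2 ((f x * g (s - x)) / (h x * g (s - x))) :=
        Finset.sum_le_sum fun s _ => step1 s
    _ = ∑ x, ∑ s, (f x * g (s - x)) * Real.logb 2 ((f x * g (s - x)) / (h x * g (s - x))) :=
        Finset.sum_comm
    _ = ∑ x, f x * Real.logb 2 (f x / h x) := by
        refine Finset.sum_congr rfl fun x _ => ?_
        have key : ∀ s, (f x * g (s - x)) * Real.logb 2 ((f x * g (s - x)) / (h x * g (s - x)))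
            = (f x * Real.logb 2 (f x / h x)) * g (s - x) := by
          intro s
          by_cases hgs : g (s - x) = 0
          · simp [hgs]
          · rw [mul_div_mul_right _ _ hgs]
            ring
        simp_rw [key]
        rw [← Finset.mul_sum, sum_shift', hg.2, mul_one]

lemma kl_conv_le' {f g h : α → ℝ}
    (hf : ∀ x, 0 ≤ f x) (hg : IsDist g) (hh : ∀ x, 0 ≤ h x) :
    KL (addDist f g) (addDist h g) ≤ KL f h := by
  by_cases hsupp : ∀ x, h x = 0 → f x = 0
  · simp only [KL]
    rw [if_pos (fun s hs => addDist_support' hf hg.1 hh hsupp s hs), if_pos hsupp]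
    exact EReal.coe_le_coe_iff.2 (kl_conv_real' hf hg hh hsupp)
  · simp only [KL]
    rw [if_neg hsupp]
    exact le_top

end ConvAux

lemma ereal_le_iInf_add {ι : Sort*} (K : ι → EReal) (c : ℝ) (L : EReal)
    (h : ∀ t, L ≤ K t + (c : EReal)) : L ≤ (⨅ t, K t) + (c : EReal) := by
  have h1 : L - (c : EReal) ≤ ⨅ t, K t :=
    le_iInf fun t => (EReal.sub_le_iff_le_add (Or.inl (EReal.coe_ne_bot c))
      (Or.inl (EReal.coe_ne_top c))).2 (h t)
  calc L = L - (c : EReal) + (c : EReal) := (EReal.sub_add_cancel).symm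
    _ ≤ (⨅ t, K t) + (c : EReal) := add_le_add h1 le_rfl

lemma ereal_coe_sum {ι : Type*} (s : Finset ι) (f : ι → ℝ) :
    ((∑ i ∈ s, f i : ℝ) : EReal) = ∑ i ∈ s, (f i : EReal) := by
  classical
  induction s using Finset.induction with
  | empty => simp
  | insert _ _ hx ih => rw [Finset.sum_insert hx, Finset.sum_insert hx, EReal.coe_add, ih]

/-- real-valued KL sum. -/
def klReal {α : Type*} [Fintype α] (f g : α → ℝ) : ℝ :=
  ∑ x, f x * Real.logb 2 (f x / g x)

lemma KL_eq_klReal {α : Type*} [Fintype α] {f g : α → ℝ}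
    (hsupp : ∀ x, g x = 0 → f x = 0) : KL f g = ((klReal f g : ℝ) : EReal) :=
  if_pos hsupp

lemma marg_zero' {α S : Type*} [Fintype α] [Fintype S] {π : α × S → ℝ}
    (hπ0 : ∀ p, 0 ≤ π p) {x : α} (h : margFst π x = 0) (z : S) : π (x, z) = 0 :=
  (Finset.sum_eq_zero_iff_of_nonneg (fun z _ => hπ0 (x, z))).mp h z (Finset.mem_univ z)

lemma marg_snd_zero' {α S : Type*} [Fintype α] [Fintype S] {π : α × S → ℝ}
    (hπ0 : ∀ p, 0 ≤ π p) {z : S} (h : margSnd π z = 0) (x : α) : π (x, z) = 0 :=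
  (Finset.sum_eq_zero_iff_of_nonneg (fun x _ => hπ0 (x, z))).mp h x (Finset.mem_univ x)

lemma sum_margSnd' {α S : Type*} [Fintype α] [Fintype S] (π : α × S → ℝ)
    (hπ : ∑ p, π p = 1) : ∑ z, margSnd π z = 1 := by
  rw [← hπ, Fintype.sum_prod_type_right]
  rfl

lemma cond_identity {α S : Type*} [Fintype α] [Fintype S] (π : α × S → ℝ)
    (hπ0 : ∀ p, 0 ≤ π p) (q : α → ℝ)
    (hsupp : ∀ x, q x = 0 → margFst π x = 0) :
    ∑ z, (if margSnd π z = 0 then (0:ℝ)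
        else margSnd π z * (klReal (condDist π z) q + ent (condDist π z)))
      = klReal (margFst π) q + ent (margFst π) := by
  have stepA : ∀ z, (if margSnd π z = 0 then (0:ℝ)
      else margSnd π z * (klReal (condDist π z) q + ent (condDist π z)))
      = ∑ x, -(π (x, z) * Real.logb 2 (q x)) := by
    intro z
    by_cases hz : margSnd π z = 0
    · rw [if_pos hz]
      symm
      refine Finset.sum_eq_zero fun x _ => ?_
      rw [marg_snd_zero' hπ0 hz x]
      simp
    · rw [if_neg hz, klReal, ent, ← Finset.sum_add_distrib, Finset.mul_sum]
      refine Finset.sum_congr rfl fun x _ => ?_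
      by_cases hx : π (x, z) = 0
      · simp [condDist, hx]
      · have hq : q x ≠ 0 := fun hq => hx (marg_zero' hπ0 (hsupp x hq) z)
        have hc : condDist π z x ≠ 0 := div_ne_zero hx hz
        show margSnd π z * (condDist π z x * Real.logb 2 (condDist π z x / q x)
            + -(condDist π z x * Real.logb 2 (condDist π z x)))
            = -(π (x, z) * Real.logb 2 (q x))
        rw [Real.logb_div hc hq]
        have hPc : margSnd π z * condDist π z x = π (x, z) := by
          show margSnd π z * (π (x, z) / margSnd π z) = π (x, z)
          rw [mul_div_cancel₀ _ hz]
        calc margSnd π z * (condDist π z x * (Real.logb 2 (condDist π z x) - Real.logb 2 (q x))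
              + -(condDist π z x * Real.logb 2 (condDist π z x)))
            = (margSnd π z * condDist π z x) * (-(Real.logb 2 (q x))) := by ring
          _ = -(π (x, z) * Real.logb 2 (q x)) := by rw [hPc]; ring
  simp_rw [stepA]
  rw [Finset.sum_comm]
  have stepC : ∀ x, ∑ z, -(π (x, z) * Real.logb 2 (q x))
      = -(margFst π x * Real.logb 2 (q x)) := by
    intro x
    rw [Finset.sum_neg_distrib, ← Finset.sum_mul]
    rfl
  simp_rw [stepC]
  rw [klReal, ent, ← Finset.sum_add_distrib]
  refine Finset.sum_congr rfl fun x _ => ?_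
  by_cases hx : margFst π x = 0
  · simp [hx]
  · have hq : q x ≠ 0 := fun hq => hx (hsupp x hq)
    rw [Real.logb_div hx hq]
    ring

lemma unifFin_nonneg {α : Type*} [Fintype α] (A : Finset α) (x : α) :
    0 ≤ unifFin A x := by
  rw [unifFin]
  split
  · positivity
  · exact le_refl 0


/-- for independent `X ∼ f`, `Y ∼ g` on `𝔽₂ⁿ`,
`τ⁺(X+Y) ≤ τ⁺(X) + H(X+Y) − H(X)`; and for any `(X, Z)` jointly distributed (joint
distribution `π`) with `X` valued in `𝔽₂ⁿ`, `τ⁺(X | Z) ≤ τ⁺(X)`, where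
`τ⁺(X|Z) = E_{z∼Z} τ⁺(X|_{Z=z})`. -/
theorem stmt_17 (n : ℕ) (A : Finset (F2 n)) (hA : A.Nonempty) :
    (∀ f g : F2 n → ℝ, IsDist f → IsDist g →
        tauPlus A (addDist f g)
          ≤ tauPlus A f + ((ent (addDist f g) - ent f : ℝ) : EReal))
    ∧ (∀ (S : Type) [Fintype S], ∀ π : F2 n × S → ℝ, IsDist π →
        (∑ z, (margSnd π z : EReal) * tauPlus A (condDist π z))
          ≤ tauPlus A (margFst π)) := by
  constructor
  · intro f g hf hg
    have hT : tauMinus A (addDist f g) ≤ tauMinus A f := by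
      simp only [tauMinus]
      refine le_iInf fun t => ?_
      obtain ⟨t, htd⟩ := t
      calc (⨅ t' : {t' : F2 n → ℝ // IsDist t'},
              KL (addDist f g) (addDist (unifFin A) t'.1))
          ≤ KL (addDist f g) (addDist (unifFin A) (addDist t g)) :=
            iInf_le _ (⟨addDist t g, isDist_addDist' htd hg⟩ : {t' : F2 n → ℝ // IsDist t'})
        _ = KL (addDist f g) (addDist (addDist (unifFin A) t) g) := by
            rw [addDist_assoc']
        _ ≤ KL f (addDist (unifFin A) t) :=
            kl_conv_le' hf.1 hg (addDist_nonneg' (unifFin_nonneg A) htd.1)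
    rw [tauPlus, tauPlus, add_assoc, ← EReal.coe_add]
    have hc : (ent f - ent (unifFin A)) + (ent (addDist f g) - ent f)
        = ent (addDist f g) - ent (unifFin A) := by ring
    rw [hc]
    exact add_le_add hT le_rfl
  · intro S _ π hπ
    have hπ0 := hπ.1
    rw [tauPlus, tauMinus]
    refine ereal_le_iInf_add _ _ _ fun t => ?_
    obtain ⟨t, htd⟩ := t
    set q := addDist (unifFin A) t with hq
    by_cases hsupp : ∀ x, q x = 0 → margFst π x = 0
    · rw [KL_eq_klReal hsupp, ← EReal.coe_add]
      set r : S → ℝ := fun z => if margSnd π z = 0 then 0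
        else margSnd π z * (klReal (condDist π z) q
          + (ent (condDist π z) - ent (unifFin A))) with hr
      have hterm : ∀ z, (margSnd π z : EReal) * tauPlus A (condDist π z)
          ≤ ((r z : ℝ) : EReal) := by
        intro z
        by_cases hz : margSnd π z = 0
        · rw [hz, EReal.coe_zero, EReal.zero_mul]
          simp only [hr, hz, if_pos]
          exact le_refl _
        · have hsz : ∀ x, q x = 0 → condDist π z x = 0 := by
            intro x hqx
            have h1 : π (x, z) = 0 := marg_zero' hπ0 (hsupp x hqx) z
            show π (x, z) / margSnd π z = 0
            rw [h1, zero_div]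
          have h1 : tauMinus A (condDist π z)
              ≤ ((klReal (condDist π z) q : ℝ) : EReal) := by
            rw [tauMinus]
            refine iInf_le_of_le ⟨t, htd⟩ ?_
            rw [← hq, KL_eq_klReal hsz]
          have h2 : tauPlus A (condDist π z)
              ≤ ((klReal (condDist π z) q
                  + (ent (condDist π z) - ent (unifFin A)) : ℝ) : EReal) := by
            rw [tauPlus, EReal.coe_add]
            exact add_le_add h1 le_rfl
          calc (margSnd π z : EReal) * tauPlus A (condDist π z)
              ≤ (margSnd π z : EReal) * ((klReal (condDist π z) q
                  + (ent (condDist π z) - ent (unifFin A)) : ℝ) : EReal) :=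
                mul_le_mul_of_nonneg_left h2
                  (EReal.coe_nonneg.2 (Finset.sum_nonneg fun x _ => hπ0 (x, z)))
            _ = ((margSnd π z * (klReal (condDist π z) q
                  + (ent (condDist π z) - ent (unifFin A))) : ℝ) : EReal) :=
                (EReal.coe_mul _ _).symm
            _ = ((r z : ℝ) : EReal) := by
                simp only [hr, hz, if_neg, if_false]
      calc ∑ z, (margSnd π z : EReal) * tauPlus A (condDist π z)
          ≤ ∑ z, ((r z : ℝ) : EReal) := Finset.sum_le_sum fun z _ => hterm z
        _ = ((∑ z, r z : ℝ) : EReal) := (ereal_coe_sum _ _).symm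
        _ ≤ ((klReal (margFst π) q
            + (ent (margFst π) - ent (unifFin A)) : ℝ) : EReal) := by
            apply EReal.coe_le_coe_iff.2
            apply le_of_eq
            have hsplit : ∀ z, r z = (if margSnd π z = 0 then (0:ℝ)
                else margSnd π z * (klReal (condDist π z) q + ent (condDist π z)))
                - margSnd π z * ent (unifFin A) := by
              intro z
              by_cases hz : margSnd π z = 0
              · simp only [hr, hz, if_pos]
                ring
              · simp only [hr, hz, if_neg, if_false]
                ring
            simp_rw [hsplit]
            rw [Finset.sum_sub_distrib, cond_identity π hπ0 q hsupp, ← Finset.sum_mul,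
              sum_margSnd' π hπ.2, one_mul]
            ring
    · simp only [KL]
      rw [if_neg hsupp, EReal.top_add_coe]
      exact le_top


end
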